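/- A set B of Boolean functions generates a clone containing the binary implication function x → y (= ¬x ∨ y) if and only if B is not contained in any of the clones P0 (0-preserving functions), D (self-dual functions), A (affine functions over GF(2)), or M (monotone functions). -/

import Mathlib

/-- Membership in the clone generated by a family `B` of Boolean functions
(given with their arities): the least set of functions containing `B`,
containing all projections, and closed under composition. -/
inductive InClone (B : ∀ n : ℕ, Set ((Fin n → Bool) → Bool)) :
    ∀ n : ℕ, ((Fin n → Bool) → Bool) → Prop
  | of {n : ℕ} {f : (Fin n → Bool) → Bool} : f ∈ B n → InClone B n f
  | proj {n : ℕ} (i : Fin n) : InClone B n (fun x => x i)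
  | comp {n m : ℕ} (f : (Fin m → Bool) → Bool) (g : Fin m → ((Fin n → Bool) → Bool)) :
      InClone B m f → (∀ i, InClone B n (g i)) →
      InClone B n (fun x => f (fun i => g i x))

/-- Boolean implication as a binary Boolean function. -/
def impFun : (Fin 2 → Bool) → Bool := fun x => !(x 0) || x 1

/-- `f` preserves `0`. -/
def Pres0 {n : ℕ} (f : (Fin n → Bool) → Bool) : Prop := f (fun _ => false) = false

/-- `f` is self-dual. -/
def SelfDual {n : ℕ} (f : (Fin n → Bool) → Bool) : Prop :=
  ∀ x : Fin n → Bool, f (fun i => !(x i)) = !(f x)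

/-- `f` is affine over GF(2): `f(x) = Σ_{i∈I} x_i + c (mod 2)`. -/
def AffineFun {n : ℕ} (f : (Fin n → Bool) → Bool) : Prop :=
  ∃ (s : Finset (Fin n)) (c : ZMod 2), ∀ x : Fin n → Bool,
    (if f x then (1 : ZMod 2) else 0) = (∑ i ∈ s, if x i then (1 : ZMod 2) else 0) + c

/-- `f` is monotone with respect to the coordinatewise order. -/
def MonotoneFun {n : ℕ} (f : (Fin n → Bool) → Bool) : Prop :=
  ∀ x y : Fin n → Bool, (∀ i, x i ≤ y i) → f x ≤ f y

/-- A set `B` of Boolean functions generates a clone containing implication iff `B` is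
not contained in any of the clones `P0` (0-preserving), `D` (self-dual), `A` (affine),
`M` (monotone). -/
def b2z (b : Bool) : ZMod 2 := if b then 1 else 0

lemma b2z_xor (a b : Bool) : b2z (xor a b) = b2z a + b2z b := by
  cases a <;> cases b <;> decide

lemma b2z_inj {a b : Bool} (h : b2z a = b2z b) : a = b := by
  cases a <;> cases b <;> simp_all <;> exact absurd h (by decide)

/-- key induction: constant discrete derivatives imply affine -/
lemma affine_of_delta {n : ℕ} (f : (Fin n → Bool) → Bool) (d : Fin n → Bool)
    (hd : ∀ i (w : Fin n → Bool), w i = false →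
      f (Function.update w i true) = xor (f w) (d i)) : AffineFun f := by
  classical
  refine ⟨Finset.univ.filter (fun i => d i = true), b2z (f (fun _ => false)), ?_⟩
  have key : ∀ N (x : Fin n → Bool), (Finset.univ.filter (fun j => x j = true)).card ≤ N →
      b2z (f x) = (∑ i ∈ Finset.univ.filter (fun i => d i = true), b2z (x i))
        + b2z (f (fun _ => false)) := by
    intro N
    induction N with
    | zero =>
      intro x hx
      have hempty : (Finset.univ.filter (fun j => x j = true)) = ∅ :=
        Finset.card_eq_zero.mp (Nat.le_zero.mp hx)
      have hxf : x = (fun _ => false) := by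
        funext j
        by_contra hj
        have : j ∈ Finset.univ.filter (fun j => x j = true) := by
          simp [Bool.not_eq_false] at hj ⊢; exact hj
        simp [hempty] at this
      subst hxf
      rw [Finset.sum_eq_zero (by intro i _; simp [b2z]), zero_add]
    | succ N ih =>
      intro x hx
      by_cases hzero : ∀ j, x j = false
      · have hxf : x = (fun _ => false) := funext hzero
        subst hxf
        rw [Finset.sum_eq_zero (by intro i _; simp [b2z]), zero_add]
      · push_neg at hzero
        obtain ⟨i, hi⟩ := hzero
        have hxi : x i = true := by simpa [Bool.not_eq_false] using hi
        set w := Function.update x i false with hw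
        have hwi : w i = false := by simp [hw]
        have hupd : Function.update w i true = x := by
          funext j
          by_cases hj : j = i
          · subst hj; simp [hw, hxi]
          · simp [hw, Function.update_of_ne hj]
        have hfx : f x = xor (f w) (d i) := by rw [← hupd]; exact hd i w hwi
        have hcard : (Finset.univ.filter (fun j => w j = true)).card ≤ N := by
          have heq : (Finset.univ.filter (fun j => w j = true))
              = (Finset.univ.filter (fun j => x j = true)).erase i := by
            ext j
            by_cases hj : j = i <;> simp [hj, hw, Function.update_of_ne, hxi] <;> simp [hj]
          rw [heq]
          have hmem : i ∈ Finset.univ.filter (fun j => x j = true) := by simp [hxi]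
          have := Finset.card_erase_of_mem hmem
          omega
        have ihw := ih w hcard
        rw [hfx, b2z_xor, ihw]
        have hsum : (∑ j ∈ Finset.univ.filter (fun i => d i = true), b2z (x j))
            = (∑ j ∈ Finset.univ.filter (fun i => d i = true), b2z (w j)) + b2z (d i) := by
          have hchar : ∀ a : ZMod 2, a + a = 0 := by decide
          have h2 : (∑ j ∈ Finset.univ.filter (fun i => d i = true), b2z (x j))
              + (∑ j ∈ Finset.univ.filter (fun i => d i = true), b2z (w j)) = b2z (d i) := by
            rw [← Finset.sum_add_distrib]
            have : ∀ j ∈ Finset.univ.filter (fun i => d i = true),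
                b2z (x j) + b2z (w j) = if j = i then 1 else 0 := by
              intro j hj
              by_cases hji : j = i
              · subst hji; simp [hxi, hw, b2z]
              · simp [hji, hw, Function.update_of_ne hji, hchar]
            rw [Finset.sum_congr rfl this, Finset.sum_ite_eq' _ i (fun _ => (1 : ZMod 2))]
            by_cases hdi : d i = true <;> simp [hdi, b2z]
          calc (∑ j ∈ Finset.univ.filter (fun i => d i = true), b2z (x j))
              = (∑ j ∈ Finset.univ.filter (fun i => d i = true), b2z (x j))
                + ((∑ j ∈ Finset.univ.filter (fun i => d i = true), b2z (w j))
                + (∑ j ∈ Finset.univ.filter (fun i => d i = true), b2z (w j))) := by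
                  rw [hchar, add_zero]
            _ = ((∑ j ∈ Finset.univ.filter (fun i => d i = true), b2z (x j))
                + (∑ j ∈ Finset.univ.filter (fun i => d i = true), b2z (w j)))
                + (∑ j ∈ Finset.univ.filter (fun i => d i = true), b2z (w j)) := by ring
            _ = b2z (d i) + (∑ j ∈ Finset.univ.filter (fun i => d i = true), b2z (w j)) := by
                  rw [h2]
            _ = _ := by ring
        rw [hsum]; ring
  intro x
  exact key _ x le_rfl

/-- affine functions satisfy the xor-of-three characterization -/
lemma affChar_of_affine {n : ℕ} {f : (Fin n → Bool) → Bool} (h : AffineFun f)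
    (x y z : Fin n → Bool) :
    f (fun i => xor (xor (x i) (y i)) (z i)) = xor (xor (f x) (f y)) (f z) := by
  obtain ⟨s, c, hs⟩ := h
  have hs' : ∀ x : Fin n → Bool, b2z (f x) = (∑ i ∈ s, b2z (x i)) + c := hs
  apply b2z_inj
  rw [hs', b2z_xor, b2z_xor, hs', hs', hs']
  have : (∑ i ∈ s, b2z (xor (xor (x i) (y i)) (z i)))
      = (∑ i ∈ s, b2z (x i)) + (∑ i ∈ s, b2z (y i)) + (∑ i ∈ s, b2z (z i)) := by
    rw [← Finset.sum_add_distrib, ← Finset.sum_add_distrib]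
    exact Finset.sum_congr rfl (fun i _ => by rw [b2z_xor, b2z_xor])
  rw [this]
  have h3 : c + c = 0 := CharTwo.add_self_eq_zero c
  linear_combination -h3

lemma affine_of_affChar {n : ℕ} {f : (Fin n → Bool) → Bool}
    (h : ∀ x y z : Fin n → Bool,
      f (fun i => xor (xor (x i) (y i)) (z i)) = xor (xor (f x) (f y)) (f z)) :
    AffineFun f := by
  classical
  apply affine_of_delta f
    (fun i => xor (f (Function.update (fun _ => false) i true)) (f (fun _ => false)))
  intro i w hwi
  have hupd : Function.update w i true
      = (fun j => xor (xor (w j) (Function.update (fun _ => false) i true j)) ((fun _ => false) j)) := by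
    funext j
    by_cases hj : j = i
    · subst hj; simp [hwi]
    · simp [Function.update_of_ne hj]
  rw [hupd, h w (Function.update (fun _ => false) i true) (fun _ => false), Bool.xor_assoc]

lemma nonaffine_witness {n : ℕ} {f : (Fin n → Bool) → Bool} (h : ¬ AffineFun f) :
    ∃ (i : Fin n) (w : Fin n → Bool), w i = false ∧
      xor (xor (f (Function.update (fun _ => true) i false)) (f w))
        (xor (f (fun _ => true)) (f (Function.update w i true))) = true := by
  classical
  by_contra hc
  push_neg at hc
  apply h
  apply affine_of_delta f (fun i => xor (f (fun _ => true)) (f (Function.update (fun _ => true) i false)))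
  intro i w hwi
  have := hc i w hwi
  revert this
  generalize f (Function.update (fun _ => true) i false) = A
  generalize f w = C
  generalize f (fun _ => true) = D
  generalize f (Function.update w i true) = E
  revert A C D E; decide

lemma nonmono_witness {n : ℕ} {f : (Fin n → Bool) → Bool} (h : ¬ MonotoneFun f) :
    ∃ (a : Fin n → Bool) (j : Fin n), a j = false ∧ f a = true ∧
      f (Function.update a j true) = false := by
  classical
  unfold MonotoneFun at h
  push_neg at h
  obtain ⟨x, y, hle, hfxy⟩ := h
  have hfx : f x = true ∧ f y = false := by
    revert hfxy; cases f x <;> cases f y <;> decide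
  have key : ∀ N (x y : Fin n → Bool), (∀ i, x i ≤ y i) → f x = true → f y = false →
      (Finset.univ.filter (fun j => x j ≠ y j)).card ≤ N →
      ∃ (a : Fin n → Bool) (j : Fin n), a j = false ∧ f a = true ∧
        f (Function.update a j true) = false := by
    intro N
    induction N with
    | zero =>
      intro x y hle hfx hfy hcard
      exfalso
      have : x = y := by
        funext j
        by_contra hj
        have : j ∈ Finset.univ.filter (fun j => x j ≠ y j) := by simpa using hj
        rw [Finset.card_eq_zero.mp (Nat.le_zero.mp hcard)] at this
        simp at this
      rw [this, hfy] at hfx; exact Bool.false_ne_true hfx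
    | succ N ih =>
      intro x y hle hfx hfy hcard
      have hne : x ≠ y := by
        intro hxy; rw [hxy, hfy] at hfx; exact Bool.false_ne_true hfx
      have : ∃ j, x j ≠ y j := by
        by_contra hc; push_neg at hc; exact hne (funext hc)
      obtain ⟨j, hj⟩ := this
      have hxj : x j = false ∧ y j = true := by
        have h1 := hle j
        revert h1 hj
        cases x j <;> cases y j <;> decide
      by_cases hfx' : f (Function.update x j true) = false
      · exact ⟨x, j, hxj.1, hfx, hfx'⟩
      · have hfx'' : f (Function.update x j true) = true := by
          cases hv : f (Function.update x j true) <;> simp_all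
        apply ih (Function.update x j true) y _ hfx'' hfy
        · have heq : (Finset.univ.filter (fun k => Function.update x j true k ≠ y k))
              = (Finset.univ.filter (fun k => x k ≠ y k)).erase j := by
            ext k
            by_cases hk : k = j
            · subst hk; simp [hxj.2]
            · simp [Function.update_of_ne hk, hk]
          rw [heq]
          have hmem : j ∈ Finset.univ.filter (fun k => x k ≠ y k) := by simpa using hj
          have := Finset.card_erase_of_mem hmem
          omega
        · intro i
          by_cases hi : i = j
          · subst hi; simp [hxj.2]
          · rw [Function.update_of_ne hi]; exact hle i
  exact key _ x y hle hfx.1 hfx.2 le_rfl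

section closures
variable {B : ∀ n : ℕ, Set ((Fin n → Bool) → Bool)}

lemma clone_pres0 (hB : ∀ n, ∀ f ∈ B n, Pres0 f) {n : ℕ} {f : (Fin n → Bool) → Bool}
    (h : InClone B n f) : Pres0 f := by
  induction h with
  | of hf => exact hB _ _ hf
  | proj i => rfl
  | comp f g hf hg ihf ihg =>
    unfold Pres0
    have : (fun i => g i (fun _ => false)) = (fun _ => false) := funext fun i => ihg i
    simpa [this] using (@id (f (fun _ => false) = false) ihf)

lemma clone_selfdual (hB : ∀ n, ∀ f ∈ B n, SelfDual f) {n : ℕ} {f : (Fin n → Bool) → Bool}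
    (h : InClone B n f) : SelfDual f := by
  induction h with
  | of hf => exact hB _ _ hf
  | proj i => intro x; rfl
  | comp f g hf hg ihf ihg =>
    intro x
    have h1 : (fun i => g i (fun j => !(x j))) = (fun i => !(g i x)) := funext fun i => ihg i x
    show f (fun i => g i (fun j => !(x j))) = _
    rw [h1]
    exact ihf (fun i => g i x)

lemma clone_mono (hB : ∀ n, ∀ f ∈ B n, MonotoneFun f) {n : ℕ} {f : (Fin n → Bool) → Bool}
    (h : InClone B n f) : MonotoneFun f := by
  induction h with
  | of hf => exact hB _ _ hf
  | proj i => intro x y hxy; exact hxy i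
  | comp f g hf hg ihf ihg =>
    intro x y hxy
    exact ihf _ _ (fun i => ihg i x y hxy)

lemma clone_affine (hB : ∀ n, ∀ f ∈ B n, AffineFun f) {n : ℕ} {f : (Fin n → Bool) → Bool}
    (h : InClone B n f) : AffineFun f := by
  induction h with
  | of hf => exact hB _ _ hf
  | proj i =>
    apply affine_of_affChar; intro x y z; rfl
  | comp f g hf hg ihf ihg =>
    apply affine_of_affChar
    intro x y z
    have h1 : (fun i => g i (fun j => xor (xor (x j) (y j)) (z j)))
        = (fun i => xor (xor (g i x) (g i y)) (g i z)) :=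
      funext fun i => affChar_of_affine (ihg i) x y z
    show f (fun i => g i (fun j => xor (xor (x j) (y j)) (z j))) = _
    rw [h1]
    exact affChar_of_affine ihf (fun i => g i x) (fun i => g i y) (fun i => g i z)

lemma inClone_ext {n : ℕ} {f g : (Fin n → Bool) → Bool} (h : InClone B n f)
    (he : ∀ x, f x = g x) : InClone B n g := by
  have : f = g := funext he
  exact this ▸ h

lemma compose2 {f u v : (Fin 2 → Bool) → Bool} (hf : InClone B 2 f)
    (hu : InClone B 2 u) (hv : InClone B 2 v) :
    InClone B 2 (fun x => f ![u x, v x]) := by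
  have := InClone.comp f ![u, v] hf (by
    intro i
    fin_cases i
    · simpa using hu
    · simpa using hv)
  apply inClone_ext this
  intro x
  congr 1
  funext i
  fin_cases i <;> simp

end closures

def notc : (Fin 2 → Bool) → Bool := fun v => !(v 0)
def onec : (Fin 2 → Bool) → Bool := fun _ => true
def xnorc : (Fin 2 → Bool) → Bool := fun v => v 0 == v 1

section main
variable {B : ∀ n : ℕ, Set ((Fin n → Bool) → Bool)}

lemma mem_not (hn : InClone B 2 notc) {u : (Fin 2 → Bool) → Bool} (hu : InClone B 2 u) :
    InClone B 2 (fun x => !(u x)) := by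
  apply inClone_ext (compose2 hn hu hu)
  intro x; simp [notc]

lemma mem_xor_const (hn : InClone B 2 notc) {u : (Fin 2 → Bool) → Bool}
    (hu : InClone B 2 u) (b : Bool) : InClone B 2 (fun v => xor (u v) b) := by
  cases b
  · exact inClone_ext hu (by intro v; simp)
  · exact inClone_ext (mem_not hn hu) (by intro v; simp [Bool.xor_true])

lemma endgame1 (hn : InClone B 2 notc) {g : (Fin 2 → Bool) → Bool} (hg : InClone B 2 g)
    (hq : xor (xor (g ![false,false]) (g ![false,true]))
      (xor (g ![true,false]) (g ![true,true])) = true) :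
    InClone B 2 impFun := by
  have hu : InClone B 2 (fun v : Fin 2 → Bool => xor (v 0) (xor (g ![false,true]) (g ![false,false]))) :=
    mem_xor_const hn (InClone.proj 0) _
  have hw : InClone B 2 (fun v : Fin 2 → Bool => xor (v 1) (!(xor (g ![true,false]) (g ![false,false])))) :=
    mem_xor_const hn (InClone.proj 1) _
  have hG2 := compose2 hg hu hw
  have hfinal := mem_xor_const hn hG2
    (!(xor ((xor (g ![true,false]) (g ![false,false])) && (xor (g ![false,true]) (g ![false,false]))) (g ![false,false])))
  apply inClone_ext hfinal
  intro v
  have hgv : ∀ p q : Bool, g ![p, q] =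
      (if p then (if q then g ![true,true] else g ![true,false])
       else (if q then g ![false,true] else g ![false,false])) := by
    intro p q; cases p <;> cases q <;> rfl
  rw [hgv (xor (v 0) (xor (g ![false,true]) (g ![false,false])))
    (xor (v 1) (!(xor (g ![true,false]) (g ![false,false]))))]
  show _ = impFun v
  unfold impFun
  revert hq
  generalize g ![false,false] = A
  generalize g ![false,true] = C
  generalize g ![true,false] = D
  generalize g ![true,true] = E
  generalize v 0 = s
  generalize v 1 = t
  revert A C D E s t
  decide

lemma core1 (hn : InClone B 2 notc) (h1 : InClone B 2 onec)
    {na : ℕ} {fa : (Fin na → Bool) → Bool} (hfa : InClone B na fa)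
    (hnaf : ¬ AffineFun fa) : InClone B 2 impFun := by
  classical
  obtain ⟨i, w, hwi, hx4⟩ := nonaffine_witness hnaf
  have hH : InClone B 2 (fun v => fa (fun k => if k = i then v 0 else if w k then true else !(v 1))) := by
    apply InClone.comp fa (fun k => fun v => if k = i then v 0 else if w k then true else !(v 1)) hfa
    intro k
    by_cases hk : k = i
    · simpa [hk] using (InClone.proj (0 : Fin 2) : InClone B 2 _)
    · by_cases hwk : w k
      · simpa [hk, hwk] using (@id (InClone B 2 (fun _ => true)) h1)
      · simpa [hk, hwk] using mem_not hn (InClone.proj (1 : Fin 2))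
  apply endgame1 hn hH
  have c00 : (fun k => if k = i then (![false,false] : Fin 2 → Bool) 0 else if w k then true
      else !((![false,false] : Fin 2 → Bool) 1)) = Function.update (fun _ => true) i false := by
    funext k
    by_cases hk : k = i
    · subst hk; simp
    · rw [Function.update_of_ne hk]; by_cases hwk : w k <;> simp [hk, hwk]
  have c01 : (fun k => if k = i then (![false,true] : Fin 2 → Bool) 0 else if w k then true
      else !((![false,true] : Fin 2 → Bool) 1)) = w := by
    funext k
    by_cases hk : k = i
    · subst hk; simp [hwi]
    · by_cases hwk : w k <;> simp [hk, hwk]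
  have c10 : (fun k => if k = i then (![true,false] : Fin 2 → Bool) 0 else if w k then true
      else !((![true,false] : Fin 2 → Bool) 1)) = (fun _ => true) := by
    funext k
    by_cases hk : k = i
    · simp [hk]
    · by_cases hwk : w k <;> simp [hk, hwk]
  have c11 : (fun k => if k = i then (![true,true] : Fin 2 → Bool) 0 else if w k then true
      else !((![true,true] : Fin 2 → Bool) 1)) = Function.update w i true := by
    funext k
    by_cases hk : k = i
    · subst hk; simp
    · rw [Function.update_of_ne hk]; by_cases hwk : w k <;> simp [hk, hwk]
  show xor (xor (fa _) (fa _)) (xor (fa _) (fa _)) = true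
  rw [c00, c01, c10, c11]
  exact hx4

lemma core2 (hx : InClone B 2 xnorc) (h1 : InClone B 2 onec)
    {na : ℕ} {fa : (Fin na → Bool) → Bool} (hfa : InClone B na fa)
    (hnaf : ¬ AffineFun fa) : InClone B 2 impFun := by
  classical
  obtain ⟨i, w, hwi, hx4⟩ := nonaffine_witness hnaf
  have hH : InClone B 2 (fun v => fa (fun k => if k = i then v 0 else if w k then true else (v 0 == v 1))) := by
    apply InClone.comp fa (fun k => fun v => if k = i then v 0 else if w k then true else (v 0 == v 1)) hfa
    intro k
    by_cases hk : k = i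
    · simpa [hk] using (InClone.proj (0 : Fin 2) : InClone B 2 _)
    · by_cases hwk : w k
      · simpa [hk, hwk] using (@id (InClone B 2 (fun _ => true)) h1)
      · simpa [hk, hwk, xnorc] using (@id (InClone B 2 (fun v => v 0 == v 1)) hx)
  set g : (Fin 2 → Bool) → Bool :=
    (fun v => fa (fun k => if k = i then v 0 else if w k then true else (v 0 == v 1))) with hgdef
  have c00 : g ![false,false] = fa (Function.update (fun _ => true) i false) := by
    apply congrArg fa
    funext k
    by_cases hk : k = i
    · subst hk; simp
    · rw [Function.update_of_ne hk]; by_cases hwk : w k <;> simp [hk, hwk]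
  have c01 : g ![false,true] = fa w := by
    apply congrArg fa
    funext k
    by_cases hk : k = i
    · subst hk; simp [hwi]
    · by_cases hwk : w k <;> simp [hk, hwk]
  have c10 : g ![true,false] = fa (Function.update w i true) := by
    apply congrArg fa
    funext k
    by_cases hk : k = i
    · subst hk; simp
    · rw [Function.update_of_ne hk]; by_cases hwk : w k <;> simp [hk, hwk]
  have c11 : g ![true,true] = fa (fun _ => true) := by
    apply congrArg fa
    funext k
    by_cases hk : k = i
    · simp [hk]
    · by_cases hwk : w k <;> simp [hk, hwk]
  have hq : xor (xor (g ![false,false]) (g ![false,true]))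
      (xor (g ![true,false]) (g ![true,true])) = true := by
    rw [c00, c01, c10, c11]
    revert hx4
    generalize fa (Function.update (fun _ => true) i false) = A
    generalize fa w = C
    generalize fa (fun _ => true) = D
    generalize fa (Function.update w i true) = E
    revert A C D E; decide
  clear_value g
  clear hgdef c00 c01 c10 c11 hx4
  cases hb11 : g ![true,true]
  · -- constant false available, hence not
    have hz := compose2 hH h1 h1
    have hnot : InClone B 2 notc := by
      apply inClone_ext (compose2 hx (InClone.proj 0) hz)
      intro v
      simp [xnorc, notc, onec, hb11]
    exact endgame1 hnot hH hq
  · rw [hb11] at hq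
    cases hb00 : g ![false,false] <;> cases hb01 : g ![false,true] <;>
      cases hb10 : g ![true,false] <;> rw [hb00, hb01, hb10] at hq <;> simp at hq
    -- four valid cases remain
    · -- (f,f,f,t) : G' = proj0
      apply inClone_ext (compose2 hx hH (InClone.proj (0 : Fin 2)))
      intro v
      rw [show v = ![v 0, v 1] from by funext i'; fin_cases i' <;> rfl]
      cases hp : v 0 <;> cases hqq : v 1 <;>
        simp [hp, hqq, xnorc, impFun, hb00, hb01, hb10, hb11]
    · -- (f,t,t,t) : G' = proj1
      apply inClone_ext (compose2 hx hH (InClone.proj (1 : Fin 2)))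
      intro v
      rw [show v = ![v 0, v 1] from by funext i'; fin_cases i' <;> rfl]
      cases hp : v 0 <;> cases hqq : v 1 <;>
        simp [hp, hqq, xnorc, impFun, hb00, hb01, hb10, hb11]
    · -- (t,f,t,t) : G' = xnorc
      apply inClone_ext (compose2 hx hH hx)
      intro v
      rw [show v = ![v 0, v 1] from by funext i'; fin_cases i' <;> rfl]
      cases hp : v 0 <;> cases hqq : v 1 <;>
        simp [hp, hqq, xnorc, impFun, hb00, hb01, hb10, hb11]
    · -- (t,t,f,t) : G' = onec
      apply inClone_ext (compose2 hx hH h1)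
      intro v
      rw [show v = ![v 0, v 1] from by funext i'; fin_cases i' <;> rfl]
      cases hp : v 0 <;> cases hqq : v 1 <;>
        simp [hp, hqq, xnorc, onec, impFun, hb00, hb01, hb10, hb11]

lemma backward
    (h0 : ∃ n, ∃ f ∈ B n, ¬ Pres0 f)
    (hd : ∃ n, ∃ f ∈ B n, ¬ SelfDual f)
    (ha : ∃ n, ∃ f ∈ B n, ¬ AffineFun f)
    (hm : ∃ n, ∃ f ∈ B n, ¬ MonotoneFun f) : InClone B 2 impFun := by
  classical
  obtain ⟨n0, f0, hf0B, hp0⟩ := h0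
  have hf0 : InClone B n0 f0 := .of hf0B
  have h00 : f0 (fun _ => false) = true := by
    revert hp0; unfold Pres0; cases f0 (fun _ => false) <;> simp
  obtain ⟨na, fa, hfaB, hnaf⟩ := ha
  have hfa : InClone B na fa := .of hfaB
  have hk : InClone B 2 (fun v => f0 (fun _ => v 0)) := by
    have := InClone.comp f0 (fun _ => fun v : Fin 2 → Bool => v 0) hf0 (fun _ => InClone.proj 0)
    exact inClone_ext this (fun v => rfl)
  cases he : f0 (fun _ => true)
  · -- we get negation
    have hn : InClone B 2 notc := by
      apply inClone_ext hk
      intro v; cases hv : v 0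
      · simp [notc, hv, h00]
      · simp [notc, hv, he]
    obtain ⟨nd, fd, hfdB, hsd⟩ := hd
    have hfd : InClone B nd fd := .of hfdB
    unfold SelfDual at hsd; push_neg at hsd
    obtain ⟨a, hna⟩ := hsd
    have hdual : fd (fun i => !(a i)) = fd a := by
      cases h1 : fd (fun i => !(a i)) <;> cases h2 : fd a <;> simp_all
    have hconst : InClone B 2 (fun v => fd (fun i => if a i then v 0 else !(v 0))) := by
      apply InClone.comp fd (fun i => fun v : Fin 2 → Bool => if a i then v 0 else !(v 0)) hfd
      intro i
      by_cases hai : a i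
      · simpa [hai] using (InClone.proj (0 : Fin 2) : InClone B 2 _)
      · simpa [hai, notc] using (@id (InClone B 2 (fun v => !(v 0))) hn)
    have hcval : ∀ v : Fin 2 → Bool, fd (fun i => if a i then v 0 else !(v 0)) = fd a := by
      intro v; cases hv : v 0
      · rw [show (fun i => if a i = true then false else !false) = (fun i => !(a i)) from
          funext fun i => by cases hai : a i <;> simp [hai]]
        exact hdual
      · rw [show (fun i => if a i = true then true else !true) = a from
          funext fun i => by cases hai : a i <;> simp [hai]]
    cases hc : fd a
    · have h1c : InClone B 2 onec := by
        apply inClone_ext (mem_not hn hconst)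
        intro v; simp [onec, hcval v, hc]
      exact core1 hn h1c hfa hnaf
    · have h1c : InClone B 2 onec := by
        apply inClone_ext hconst
        intro v; simp [onec, hcval v, hc]
      exact core1 hn h1c hfa hnaf
  · -- we get the constant 1
    have h1c : InClone B 2 onec := by
      apply inClone_ext hk
      intro v; cases hv : v 0 <;> simp [onec, hv, h00, he]
    obtain ⟨nm, fm, hfmB, hnm⟩ := hm
    have hfm : InClone B nm fm := .of hfmB
    obtain ⟨a, j, haj, hva1, hva2⟩ := nonmono_witness hnm
    have hH : InClone B 2 (fun v => fm (fun k => if k = j then v 0 else if a k then true else v 1)) := by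
      apply InClone.comp fm
        (fun k => fun v : Fin 2 → Bool => if k = j then v 0 else if a k then true else v 1) hfm
      intro k
      by_cases hk' : k = j
      · simpa [hk'] using (InClone.proj (0 : Fin 2) : InClone B 2 _)
      · by_cases hak : a k
        · simpa [hk', hak, onec] using (@id (InClone B 2 (fun _ => true)) h1c)
        · simpa [hk', hak] using (InClone.proj (1 : Fin 2) : InClone B 2 _)
    set g : (Fin 2 → Bool) → Bool :=
      (fun v => fm (fun k => if k = j then v 0 else if a k then true else v 1)) with hgdef
    have c00 : g ![false,false] = fm a := by
      apply congrArg fm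
      funext k
      by_cases hk' : k = j
      · subst hk'; simp [haj]
      · by_cases hak : a k <;> simp [hk', hak]
    have c10 : g ![true,false] = fm (Function.update a j true) := by
      apply congrArg fm
      funext k
      by_cases hk' : k = j
      · subst hk'; simp
      · rw [Function.update_of_ne hk']; by_cases hak : a k <;> simp [hk', hak]
    have c01 : g ![false,true] = fm (Function.update (fun _ => true) j false) := by
      apply congrArg fm
      funext k
      by_cases hk' : k = j
      · subst hk'; simp
      · rw [Function.update_of_ne hk']; by_cases hak : a k <;> simp [hk', hak]
    have c11 : g ![true,true] = fm (fun _ => true) := by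
      apply congrArg fm
      funext k
      by_cases hk' : k = j
      · simp [hk']
      · by_cases hak : a k <;> simp [hk', hak]
    cases hE0 : fm (Function.update (fun _ => true) j false)
    · cases hE1 : fm (fun _ => true)
      · -- NOR : negation
        have hnot : InClone B 2 notc := by
          apply inClone_ext (compose2 hH (InClone.proj 0) (InClone.proj 0))
          intro v; cases hv : v 0
          · simp [notc, hv, c00, hva1]
          · simp [notc, hv, c11, hE1]
        exact core1 hnot h1c hfa hnaf
      · -- XNOR
        have hxn : InClone B 2 xnorc := by
          apply inClone_ext hH
          intro v
          rw [show v = ![v 0, v 1] from by funext i'; fin_cases i' <;> rfl]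
          cases hp : v 0 <;> cases hq : v 1 <;>
            simp [hp, hq, xnorc, ← hgdef, c00, c01, c10, c11, hva1, hva2, hE0, hE1]
        exact core2 hxn h1c hfa hnaf
    · cases hE1 : fm (fun _ => true)
      · -- negation of first coordinate
        have hnot : InClone B 2 notc := by
          apply inClone_ext hH
          intro v
          rw [show v = ![v 0, v 1] from by funext i'; fin_cases i' <;> rfl]
          cases hp : v 0 <;> cases hq : v 1 <;>
            simp [hp, hq, notc, ← hgdef, c00, c01, c10, c11, hva1, hva2, hE0, hE1]
        exact core1 hnot h1c hfa hnaf
      · -- implication directly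
        apply inClone_ext hH
        intro v
        rw [show v = ![v 0, v 1] from by funext i'; fin_cases i' <;> rfl]
        cases hp : v 0 <;> cases hq : v 1 <;>
          simp [hp, hq, impFun, ← hgdef, c00, c01, c10, c11, hva1, hva2, hE0, hE1]

end main

theorem imp_in_clone_iff (B : ∀ n : ℕ, Set ((Fin n → Bool) → Bool)) :
    InClone B 2 impFun ↔
      ¬ ((∀ n, ∀ f ∈ B n, Pres0 f) ∨ (∀ n, ∀ f ∈ B n, SelfDual f) ∨
         (∀ n, ∀ f ∈ B n, AffineFun f) ∨ (∀ n, ∀ f ∈ B n, MonotoneFun f)) := by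
  constructor
  · intro h hcon
    rcases hcon with hP | hD | hA | hM
    · have := clone_pres0 hP h
      revert this; unfold Pres0 impFun; decide
    · have := clone_selfdual hD h
      revert this; unfold SelfDual impFun; decide
    · have := clone_affine hA h
      revert this; unfold AffineFun impFun; decide
    · have := clone_mono hM h
      revert this; unfold MonotoneFun impFun; decide
  · intro h
    push_neg at h
    obtain ⟨hP, hD, hA, hM⟩ := h
    exact backward hP hD hA hM
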